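/- Let n ≥ 1 and let D ⊂ ℤ^n be a finite set. For λ ∈ D let p_λ = (v^{λ_1},…,v^{λ_n}) ∈ ℚ(v)^n. For h ∈ ℤ^n write h = h⁺ − h⁻ with h⁺, h⁻ ∈ ℕ^n the coordinatewise positive and negative parts, and set G_h = ∏_{λ∈D} (X^{h⁺} − v^{⟨h,λ⟩} X^{h⁻}) ∈ ℚ(v)[X_1,…,X_n], where X^m denotes the monomial X_1^{m_1}⋯X_n^{m_n} for m ∈ ℕ^n. Then the vanishing ideal in ℚ(v)[X_1,…,X_n] of the finite point set {p_λ : λ ∈ D} equals the ideal generated by {G_h : h ∈ ℤ^n}. -/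

import Mathlib

lemma vpow_inj : Function.Injective (fun k : ℤ => (RatFunc.X : RatFunc ℚ) ^ k) := by
  have hx : (RatFunc.X : RatFunc ℚ) ≠ 0 := RatFunc.X_ne_zero
  have key : ∀ k : ℕ, (RatFunc.X : RatFunc ℚ) ^ k = 1 → k = 0 := by
    intro k hk
    have h1 : (Polynomial.X : Polynomial ℚ) ^ k = 1 := by
      apply RatFunc.algebraMap_injective ℚ
      simpa [map_pow, RatFunc.algebraMap_X] using hk
    have := congrArg Polynomial.natDegree h1
    simpa using this
  have step : ∀ j k : ℤ, j ≤ k → (RatFunc.X : RatFunc ℚ) ^ j = (RatFunc.X : RatFunc ℚ) ^ k → j = k := by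
    intro j k hle h
    have h2 : (RatFunc.X : RatFunc ℚ) ^ (k - j) = 1 := by
      rw [zpow_sub₀ hx, ← h, div_self (zpow_ne_zero _ hx)]
    have h3 : 0 ≤ k - j := by omega
    lift k - j to ℕ using h3 with m hm
    rw [zpow_natCast] at h2
    have := key m h2
    omega
  intro j k h
  rcases le_total j k with hle | hle
  · exact step j k hle h
  · exact (step k j hle h.symm).symm

lemma vpow_sum {ι : Type*} (s : Finset ι) (g : ι → ℤ) :
    (RatFunc.X : RatFunc ℚ) ^ (∑ i ∈ s, g i) = ∏ i ∈ s, (RatFunc.X : RatFunc ℚ) ^ (g i) := by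
  classical
  induction s using Finset.induction_on with
  | empty => simp
  | insert _ _ h ih =>
    rw [Finset.sum_insert h, Finset.prod_insert h, zpow_add₀ RatFunc.X_ne_zero, ih]

lemma push_prod {A : Type*} [CommRing A] {ι : Type*} (s : Finset ι) (a b : ι → A) (ε : A)
    (hab : ∀ i ∈ s, a i * ε = b i * ε) :
    (∏ i ∈ s, a i) * ε = (∏ i ∈ s, b i) * ε := by
  classical
  induction s using Finset.induction_on with
  | empty => simp
  | @insert i s his ih =>
    rw [Finset.prod_insert his, Finset.prod_insert his, mul_assoc,
      ih (fun j hj => hab j (Finset.mem_insert_of_mem hj)), ← mul_assoc,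
      mul_comm (a i), mul_assoc, hab i (Finset.mem_insert_self _ _), ← mul_assoc,
      mul_comm _ (b i), mul_assoc]

lemma lin_coprime {K : Type*} [Field K] {a b : K} (h : a ≠ b) :
    IsCoprime (Polynomial.X - Polynomial.C a) (Polynomial.X - Polynomial.C b) := by
  have hab : a - b ≠ 0 := sub_ne_zero.2 h
  refine ⟨-(Polynomial.C (a - b)⁻¹), Polynomial.C (a - b)⁻¹, ?_⟩
  have h2 : (Polynomial.X - Polynomial.C b) - (Polynomial.X - Polynomial.C a)
      = Polynomial.C (a - b) := by rw [Polynomial.C_sub]; ring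
  calc -Polynomial.C (a - b)⁻¹ * (Polynomial.X - Polynomial.C a) +
      Polynomial.C (a - b)⁻¹ * (Polynomial.X - Polynomial.C b)
      = Polynomial.C (a - b)⁻¹ *
        ((Polynomial.X - Polynomial.C b) - (Polynomial.X - Polynomial.C a)) := by ring
    _ = Polynomial.C (a - b)⁻¹ * Polynomial.C (a - b) := by rw [h2]
    _ = 1 := by rw [← Polynomial.C_mul, inv_mul_cancel₀ hab, Polynomial.C_1]

lemma sep_aux (n : ℕ) (s : Finset (Fin n → ℤ)) :
    (∀ d ∈ s, d ≠ 0) → ∃ h : Fin n → ℤ, ∀ d ∈ s, (∑ a, h a * d a) ≠ 0 := by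
  classical
  induction s using Finset.induction_on with
  | empty => exact fun _ => ⟨0, by simp⟩
  | @insert d' s hd's ih =>
    intro hs
    obtain ⟨h, hh⟩ := ih (fun d hd => hs d (Finset.mem_insert_of_mem hd))
    set bad : (Fin n → ℤ) → ℤ := fun d => (-(∑ a, h a * d a)) / (∑ a, d' a * d a) with hbad
    obtain ⟨t, ht⟩ := Finset.exists_notMem ((insert d' s).image bad)
    refine ⟨fun a => h a + t * d' a, ?_⟩
    intro d hd
    have hexp : (∑ a, (h a + t * d' a) * d a)
        = (∑ a, h a * d a) + t * (∑ a, d' a * d a) := by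
      rw [Finset.mul_sum, ← Finset.sum_add_distrib]
      exact Finset.sum_congr rfl (fun a _ => by ring)
    rw [hexp]
    intro hzero
    have hdd : (∑ a, d' a * d a) ≠ 0 := by
      rcases Finset.mem_insert.1 hd with rfl | hds
      · have hdne : d ≠ 0 := hs d (Finset.mem_insert_self _ _)
        intro hq
        apply hdne
        funext a
        have h2 := (Finset.sum_eq_zero_iff_of_nonneg
          (fun i _ => mul_self_nonneg (d i))).1 hq a (Finset.mem_univ a)
        simpa [mul_self_eq_zero] using h2
      · intro hq
        rw [hq, mul_zero, add_zero] at hzero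
        exact hh d hds hzero
    apply ht
    refine Finset.mem_image.2 ⟨d, hd, ?_⟩
    have h3 : -(∑ a, h a * d a) = t * (∑ a, d' a * d a) := by linarith
    rw [hbad]
    simp only []
    rw [h3, Int.mul_ediv_cancel _ hdd]

lemma key_quot (n : ℕ) (D : Finset (Fin n → ℤ))
    {A : Type*} [CommRing A] [Algebra (RatFunc ℚ) A]
    (u : Fin n → Aˣ)
    (hrel : ∀ h : Fin n → ℤ,
      ∏ lam ∈ D, ((↑(∏ a, (u a) ^ (h a)) : A)
        - algebraMap (RatFunc ℚ) A ((RatFunc.X : RatFunc ℚ) ^ (∑ a, h a * lam a))) = 0)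
    (f : MvPolynomial (Fin n) (RatFunc ℚ))
    (hf : ∀ lam ∈ D, MvPolynomial.eval (fun a => (RatFunc.X : RatFunc ℚ) ^ (lam a)) f = 0) :
    MvPolynomial.aeval (fun a => ((u a : A))) f = 0 := by
  classical
  have hx : (RatFunc.X : RatFunc ℚ) ≠ 0 := RatFunc.X_ne_zero
  rcases D.eq_empty_or_nonempty with rfl | hD
  · have h10 : (1 : A) = 0 := by simpa using hrel 0
    calc MvPolynomial.aeval (fun a => ((u a : A))) f
        = MvPolynomial.aeval (fun a => ((u a : A))) f * 1 := (mul_one _).symm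
      _ = 0 := by rw [h10, mul_zero]
  -- separating functional
  obtain ⟨h₀, hh₀⟩ := sep_aux n
    (((D ×ˢ D).filter (fun p => p.1 ≠ p.2)).image (fun p => p.1 - p.2))
    (by
      intro d hd
      obtain ⟨p, hp, rfl⟩ := Finset.mem_image.1 hd
      have := (Finset.mem_filter.1 hp).2
      exact sub_ne_zero.2 this)
  have hsep : ∀ lam ∈ D, ∀ mu ∈ D, lam ≠ mu →
      (∑ a, h₀ a * lam a) ≠ (∑ a, h₀ a * mu a) := by
    intro lam hl mu hm hne heq
    have hmem : lam - mu ∈ ((D ×ˢ D).filter (fun p => p.1 ≠ p.2)).image (fun p => p.1 - p.2) :=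
      Finset.mem_image.2 ⟨(lam, mu), Finset.mem_filter.2 ⟨Finset.mem_product.2 ⟨hl, hm⟩, hne⟩, rfl⟩
    apply hh₀ _ hmem
    have : ∀ a, h₀ a * (lam - mu) a = h₀ a * lam a - h₀ a * mu a := by
      intro a; simp [Pi.sub_apply]; ring
    rw [Finset.sum_congr rfl (fun a _ => this a), Finset.sum_sub_distrib, heq, sub_self]
  set am : RatFunc ℚ →+* A := algebraMap (RatFunc ℚ) A with ham
  set c : (Fin n → ℤ) → RatFunc ℚ := fun lam => (RatFunc.X : RatFunc ℚ) ^ (∑ a, h₀ a * lam a)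
    with hc
  have hcinj : Set.InjOn c ↑D := by
    intro lam hl mu hm he
    by_contra hne
    exact hsep lam hl mu hm hne (vpow_inj he)
  set Y : A := (↑(∏ a, (u a) ^ (h₀ a)) : A) with hYdef
  set ε : (Fin n → ℤ) → A := fun ν => Polynomial.aeval Y (Lagrange.basis D c ν) with hεdef
  have hnodal : ∏ lam ∈ D, (Y - am (c lam)) = 0 := hrel h₀
  have hε : ∀ ν, ε ν
      = am (∏ j ∈ D.erase ν, (c ν - c j)⁻¹) * ∏ j ∈ D.erase ν, (Y - am (c j)) := by
    intro ν
    rw [hεdef]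
    simp only [Lagrange.basis, Lagrange.basisDivisor, map_prod, map_mul, map_sub,
      Polynomial.aeval_X, Polynomial.aeval_C]
    rw [Finset.prod_mul_distrib, ← map_prod]
  have hYε : ∀ ν ∈ D, Y * ε ν = am (c ν) * ε ν := by
    intro ν hν
    have h1 : (Y - am (c ν)) * ε ν = 0 := by
      rw [hε ν, ← mul_assoc, mul_comm (Y - am (c ν)), mul_assoc,
        Finset.mul_prod_erase D (fun j => Y - am (c j)) hν, hnodal, mul_zero]
    rw [sub_mul] at h1
    exact sub_eq_zero.mp h1
  have hYtε : ∀ ν ∈ D, ∀ t : ℕ, Y ^ t * ε ν = am ((c ν) ^ t) * ε ν := by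
    intro ν hν t
    induction t with
    | zero => simp
    | succ t ih =>
      rw [pow_succ, pow_succ, mul_assoc, hYε ν hν, ← mul_assoc, mul_comm (Y ^ t),
        mul_assoc, ih, ← mul_assoc, ← map_mul, mul_comm (c ν)]
  have hkey : ∀ ν ∈ D, ∀ h : Fin n → ℤ,
      (↑(∏ a, (u a) ^ (h a)) : A) * ε ν
        = am ((RatFunc.X : RatFunc ℚ) ^ (∑ a, h a * ν a)) * ε ν := by
    intro ν hν h
    set Z : A := (↑(∏ a, (u a) ^ (h a)) : A) with hZdef
    set e : (Fin n → ℤ) → ℤ := fun lam => ∑ a, h₀ a * lam a with he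
    set z : (Fin n → ℤ) → ℤ := fun lam => ∑ a, h a * lam a with hz
    set w : ℕ → (Fin n → ℤ) → RatFunc ℚ :=
      fun t mu => (RatFunc.X : RatFunc ℚ) ^ (z mu + (t : ℤ) * (e mu - e ν)) with hw
    -- step 1: the basic relations
    have relstep : ∀ t : ℕ, (∏ mu ∈ D, (Z - am (w t mu))) * ε ν = 0 := by
      intro t
      have h1 := hrel (fun a => h a + (t : ℤ) * h₀ a)
      have h2 : (∏ a, (u a) ^ (h a + (t : ℤ) * h₀ a))
          = (∏ a, (u a) ^ (h a)) * (∏ a, (u a) ^ (h₀ a)) ^ t := by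
        rw [← Finset.prod_pow, ← Finset.prod_mul_distrib]
        refine Finset.prod_congr rfl (fun a _ => ?_)
        rw [zpow_add, mul_comm ((t : ℤ)), zpow_mul, zpow_natCast]
      have h3 : ∀ mu : Fin n → ℤ,
          (∑ a, (h a + (t : ℤ) * h₀ a) * mu a) = z mu + (t : ℤ) * e mu := by
        intro mu
        rw [hz, he]
        simp only []
        rw [Finset.mul_sum, ← Finset.sum_add_distrib]
        exact Finset.sum_congr rfl (fun a _ => by ring)
      -- each factor of h1 matches am ((c ν)^t) * (Z - am (w t mu)) after multiplying by ε ν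
      have hfac : ∀ mu ∈ D,
          ((↑(∏ a, (u a) ^ (h a + (t : ℤ) * h₀ a)) : A)
              - am ((RatFunc.X : RatFunc ℚ) ^ (∑ a, (h a + (t : ℤ) * h₀ a) * mu a))) * ε ν
            = (am ((c ν) ^ t) * (Z - am (w t mu))) * ε ν := by
        intro mu hmu
        have hunit : (↑(∏ a, (u a) ^ (h a + (t : ℤ) * h₀ a)) : A) = Z * Y ^ t := by
          rw [h2, Units.val_mul, Units.val_pow_eq_pow_val]
        have hX : (c ν) ^ t * w t mu
            = (RatFunc.X : RatFunc ℚ) ^ (∑ a, (h a + (t : ℤ) * h₀ a) * mu a) := by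
          rw [h3 mu, hw, hc]
          simp only []
          rw [← zpow_natCast ((RatFunc.X : RatFunc ℚ) ^ (e ν)) t, ← zpow_mul, ← zpow_add₀ hx]
          congr 1
          rw [he]
          ring
        rw [hunit, ← hX]
        calc (Z * Y ^ t - am ((c ν) ^ t * w t mu)) * ε ν
            = Z * (Y ^ t * ε ν) - am ((c ν) ^ t * w t mu) * ε ν := by ring
          _ = Z * (am ((c ν) ^ t) * ε ν) - am ((c ν) ^ t * w t mu) * ε ν := by
              rw [hYtε ν hν t]
          _ = (am ((c ν) ^ t) * (Z - am (w t mu))) * ε ν := by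
              rw [map_mul]; ring
      have h4 : (∏ mu ∈ D, (am ((c ν) ^ t) * (Z - am (w t mu)))) * ε ν = 0 := by
        rw [← push_prod D _ _ (ε ν) hfac, h1, zero_mul]
      rw [Finset.prod_mul_distrib, Finset.prod_const] at h4
      have hcν : c ν ≠ 0 := zpow_ne_zero _ hx
      have hcu : IsUnit ((am ((c ν) ^ t)) ^ D.card) :=
        ((isUnit_iff_ne_zero.2 (pow_ne_zero t hcν)).map am).pow _
      rw [mul_assoc] at h4
      exact (hcu.mul_right_eq_zero).1 h4
    -- choose t' avoiding coincidences
    set bad : (Fin n → ℤ) × (Fin n → ℤ) → ℤ :=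
      fun p => (z p.1 - z p.2) / (e p.2 - e ν) with hbad
    obtain ⟨t', ht'⟩ := Finset.exists_notMem
      (((((D.erase ν) ×ˢ (D.erase ν)).image bad)).image Int.toNat)
    have hdist : ∀ mu ∈ D.erase ν, ∀ mu' ∈ D.erase ν, w 0 mu ≠ w t' mu' := by
      intro mu hmu mu' hmu' heq
      have hexp : z mu + (0 : ℤ) * (e mu - e ν) = z mu' + (t' : ℤ) * (e mu' - e ν) :=
        vpow_inj heq
      have hB : e mu' - e ν ≠ 0 :=
        sub_ne_zero.2 (hsep mu' (Finset.mem_of_mem_erase hmu') ν hν (Finset.ne_of_mem_erase hmu'))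
      apply ht'
      have h5 : z mu - z mu' = (t' : ℤ) * (e mu' - e ν) := by linarith
      have h6 : bad (mu, mu') = (t' : ℤ) := by
        rw [hbad]; simp only []; rw [h5, Int.mul_ediv_cancel _ hB]
      refine Finset.mem_image.2 ⟨(t' : ℤ), ?_, Int.toNat_natCast t'⟩
      exact Finset.mem_image.2 ⟨(mu, mu'), Finset.mem_product.2 ⟨hmu, hmu'⟩, h6⟩
    -- Bezout
    set q : ℕ → Polynomial (RatFunc ℚ) :=
      fun t => ∏ mu ∈ D.erase ν, (Polynomial.X - Polynomial.C (w t mu)) with hq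
    have hwz : ∀ t : ℕ, w t ν = (RatFunc.X : RatFunc ℚ) ^ (z ν) := by
      intro t; rw [hw]; simp only []; congr 1; ring
    have hp : ∀ t : ℕ, Polynomial.aeval Z
        ((Polynomial.X - Polynomial.C ((RatFunc.X : RatFunc ℚ) ^ (z ν))) * q t) * ε ν = 0 := by
      intro t
      have h7 : (Polynomial.X - Polynomial.C ((RatFunc.X : RatFunc ℚ) ^ (z ν))) * q t
          = ∏ mu ∈ D, (Polynomial.X - Polynomial.C (w t mu)) := by
        rw [← hwz t, hq]
        exact Finset.mul_prod_erase D (fun mu => Polynomial.X - Polynomial.C (w t mu)) hν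
      have hmp : Polynomial.aeval Z (∏ mu ∈ D, (Polynomial.X - Polynomial.C (w t mu)))
          = ∏ mu ∈ D, (Z - am (w t mu)) := by
        rw [map_prod]
        exact Finset.prod_congr rfl
          (fun mu _ => by rw [map_sub, Polynomial.aeval_X, Polynomial.aeval_C, ham])
      rw [h7, hmp]
      exact relstep t
    have hcop : IsCoprime (q 0) (q t') := by
      refine IsCoprime.prod_left (fun mu hmu => ?_)
      exact IsCoprime.prod_right (fun mu' hmu' => lin_coprime (hdist mu hmu mu' hmu'))
    obtain ⟨γ, δ, hbez⟩ := hcop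
    have h8 : (Polynomial.X - Polynomial.C ((RatFunc.X : RatFunc ℚ) ^ (z ν)))
        = γ * ((Polynomial.X - Polynomial.C ((RatFunc.X : RatFunc ℚ) ^ (z ν))) * q 0)
          + δ * ((Polynomial.X - Polynomial.C ((RatFunc.X : RatFunc ℚ) ^ (z ν))) * q t') := by
      calc Polynomial.X - Polynomial.C ((RatFunc.X : RatFunc ℚ) ^ (z ν))
          = (γ * q 0 + δ * q t') * (Polynomial.X - Polynomial.C ((RatFunc.X : RatFunc ℚ) ^ (z ν))) := by
            rw [hbez, one_mul]
        _ = _ := by ring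
    have h9 : (Z - am ((RatFunc.X : RatFunc ℚ) ^ (z ν))) * ε ν = 0 := by
      have h10 := congrArg (Polynomial.aeval Z) h8
      simp only [map_add, map_mul, map_sub, Polynomial.aeval_X, Polynomial.aeval_C] at h10
      have h11 : Polynomial.aeval Z
          ((Polynomial.X - Polynomial.C ((RatFunc.X : RatFunc ℚ) ^ (z ν))) * q 0) * ε ν = 0 := hp 0
      have h12 : Polynomial.aeval Z
          ((Polynomial.X - Polynomial.C ((RatFunc.X : RatFunc ℚ) ^ (z ν))) * q t') * ε ν = 0 := hp t'
      simp only [map_mul, map_sub, Polynomial.aeval_X, Polynomial.aeval_C] at h11 h12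
      rw [← ham] at h10 h11 h12
      linear_combination (ε ν) * h10 + Polynomial.aeval Z γ * h11 + Polynomial.aeval Z δ * h12
    rw [sub_mul] at h9
    exact sub_eq_zero.mp h9
  have hXa : ∀ ν ∈ D, ∀ a : Fin n, ((u a : A)) * ε ν
      = am ((RatFunc.X : RatFunc ℚ) ^ (ν a)) * ε ν := by
    intro ν hν a
    have hk := hkey ν hν (fun b => if b = a then 1 else 0)
    have hprod : (∏ b, (u b) ^ (if b = a then (1:ℤ) else 0)) = u a := by
      rw [Finset.prod_congr rfl (fun b _ => show (u b) ^ (if b = a then (1:ℤ) else 0)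
        = if b = a then u b else 1 by split <;> simp)]
      rw [Finset.prod_ite_eq' Finset.univ a u, if_pos (Finset.mem_univ a)]
    have hsump : (∑ b, (if b = a then (1:ℤ) else 0) * ν b) = ν a := by
      simp [ite_mul]
    rw [hprod, hsump] at hk
    exact hk
  have heval : ∀ g : MvPolynomial (Fin n) (RatFunc ℚ), ∀ ν ∈ D,
      MvPolynomial.aeval (fun a => ((u a : A))) g * ε ν
        = am (MvPolynomial.eval (fun a => (RatFunc.X : RatFunc ℚ) ^ (ν a)) g) * ε ν := by
    intro g
    induction g using MvPolynomial.induction_on with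
    | C r => intro ν hν; rw [MvPolynomial.aeval_C, MvPolynomial.eval_C, ham]
    | add p q hp hq =>
      intro ν hν
      simp only [map_add, add_mul, hp ν hν, hq ν hν]
    | mul_X p a hp =>
      intro ν hν
      rw [map_mul, MvPolynomial.aeval_X, map_mul, MvPolynomial.eval_X, map_mul]
      linear_combination ((u a : A)) * hp ν hν
        + am (MvPolynomial.eval (fun b => (RatFunc.X : RatFunc ℚ) ^ (ν b)) p) * hXa ν hν a
  have hsum1 : ∑ ν ∈ D, ε ν = 1 := by
    have hb := Lagrange.sum_basis hcinj hD
    calc ∑ ν ∈ D, ε ν = Polynomial.aeval Y (∑ ν ∈ D, Lagrange.basis D c ν) := by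
          rw [map_sum]
      _ = 1 := by rw [hb, map_one]
  calc MvPolynomial.aeval (fun a => ((u a : A))) f
      = MvPolynomial.aeval (fun a => ((u a : A))) f * ∑ ν ∈ D, ε ν := by
        rw [hsum1, mul_one]
    _ = ∑ ν ∈ D, MvPolynomial.aeval (fun a => ((u a : A))) f * ε ν := Finset.mul_sum _ _ _
    _ = 0 := Finset.sum_eq_zero (fun ν hν => by
        rw [heval f ν hν, hf ν hν, map_zero, zero_mul])

-- evaluation of a monomial ∏ X b ^ k b at the point v^lam
lemma eval_mono (n : ℕ) (lam : Fin n → ℤ) (k : Fin n → ℕ) :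
    MvPolynomial.eval (fun a : Fin n => (RatFunc.X : RatFunc ℚ) ^ (lam a))
      (∏ b, (MvPolynomial.X b : MvPolynomial (Fin n) (RatFunc ℚ)) ^ (k b))
      = (RatFunc.X : RatFunc ℚ) ^ (∑ b, lam b * (k b : ℤ)) := by
  rw [map_prod, vpow_sum]
  refine Finset.prod_congr rfl (fun b _ => ?_)
  rw [map_pow, MvPolynomial.eval_X, ← zpow_natCast ((RatFunc.X : RatFunc ℚ) ^ (lam b)) (k b),
    ← zpow_mul]

lemma easy_dir (n : ℕ) (D : Finset (Fin n → ℤ)) (h : Fin n → ℤ) (lam : Fin n → ℤ)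
    (hlam : lam ∈ D) :
    MvPolynomial.eval (fun a : Fin n => (RatFunc.X : RatFunc ℚ) ^ (lam a))
      (∏ mu ∈ D,
        ((∏ a, MvPolynomial.X a ^ (h a).toNat) -
          MvPolynomial.C ((RatFunc.X : RatFunc ℚ) ^ (∑ a, h a * mu a : ℤ)) *
            ∏ a, MvPolynomial.X a ^ (-(h a)).toNat)) = 0 := by
  have hx : (RatFunc.X : RatFunc ℚ) ≠ 0 := RatFunc.X_ne_zero
  rw [map_prod]
  apply Finset.prod_eq_zero hlam
  rw [map_sub, map_mul, MvPolynomial.eval_C, eval_mono, eval_mono]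
  have hexp : (∑ b, lam b * (((h b).toNat : ℤ)))
      = (∑ a, h a * lam a) + ∑ b, lam b * (((-(h b)).toNat : ℤ)) := by
    rw [← Finset.sum_add_distrib]
    refine Finset.sum_congr rfl (fun b _ => ?_)
    have hb : (((h b).toNat : ℤ)) = h b + (((-(h b)).toNat : ℤ)) := by omega
    rw [hb]; ring
  rw [hexp, zpow_add₀ hx, sub_self]

theorem hard_dir (n : ℕ) (D : Finset (Fin n → ℤ))
    (f : MvPolynomial (Fin n) (RatFunc ℚ))
    (hf : ∀ lam ∈ D, MvPolynomial.eval (fun a => (RatFunc.X : RatFunc ℚ) ^ (lam a)) f = 0) :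
    f ∈ Ideal.span (Set.range fun h : Fin n → ℤ =>
        ∏ lam ∈ D,
          ((∏ a, MvPolynomial.X a ^ (h a).toNat) -
            MvPolynomial.C ((RatFunc.X : RatFunc ℚ) ^ (∑ a, h a * lam a : ℤ)) *
              ∏ a, MvPolynomial.X a ^ (-(h a)).toNat)) := by
  classical
  have hx : (RatFunc.X : RatFunc ℚ) ≠ 0 := RatFunc.X_ne_zero
  set I := Ideal.span (Set.range fun h : Fin n → ℤ =>
        ∏ lam ∈ D,
          ((∏ a, MvPolynomial.X a ^ (h a).toNat) -
            MvPolynomial.C ((RatFunc.X : RatFunc ℚ) ^ (∑ a, h a * lam a : ℤ)) *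
              ∏ a, MvPolynomial.X a ^ (-(h a)).toNat)) with hI
  have hG : ∀ h : Fin n → ℤ,
      (∏ lam ∈ D,
          ((∏ a, MvPolynomial.X a ^ (h a).toNat) -
            MvPolynomial.C ((RatFunc.X : RatFunc ℚ) ^ (∑ a, h a * lam a : ℤ)) *
              ∏ a, MvPolynomial.X a ^ (-(h a)).toNat)) ∈ I :=
    fun h => Ideal.subset_span ⟨h, rfl⟩
  set A := MvPolynomial (Fin n) (RatFunc ℚ) ⧸ I with hA
  set mk : MvPolynomial (Fin n) (RatFunc ℚ) →ₐ[RatFunc ℚ] A := Ideal.Quotient.mkₐ (RatFunc ℚ) I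
    with hmk
  -- each variable is invertible mod I
  have hXunit : ∀ a : Fin n, IsUnit (mk (MvPolynomial.X a)) := by
    intro a
    set P : Polynomial (RatFunc ℚ) :=
      ∏ lam ∈ D, (Polynomial.X - Polynomial.C ((RatFunc.X : RatFunc ℚ) ^ (lam a))) with hP
    have hea : (∏ lam ∈ D,
        ((∏ b, MvPolynomial.X b ^ (if b = a then (1:ℤ) else 0).toNat) -
          MvPolynomial.C ((RatFunc.X : RatFunc ℚ) ^
            (∑ b, (if b = a then (1:ℤ) else 0) * lam b : ℤ)) *
            ∏ b, MvPolynomial.X b ^ (-(if b = a then (1:ℤ) else 0)).toNat))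
        = Polynomial.aeval (MvPolynomial.X a : MvPolynomial (Fin n) (RatFunc ℚ)) P := by
      rw [hP, map_prod]
      refine Finset.prod_congr rfl (fun lam _ => ?_)
      rw [map_sub, Polynomial.aeval_X, Polynomial.aeval_C]
      congr 1
      · rw [Finset.prod_congr rfl (fun b (_ : b ∈ Finset.univ) =>
          show (MvPolynomial.X b : MvPolynomial (Fin n) (RatFunc ℚ))
              ^ (if b = a then (1:ℤ) else 0).toNat
            = if b = a then MvPolynomial.X b else 1 by split <;> simp)]
        rw [Finset.prod_ite_eq' Finset.univ a
          (fun b => (MvPolynomial.X b : MvPolynomial (Fin n) (RatFunc ℚ))),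
          if_pos (Finset.mem_univ a)]
      · have h1 : (∑ b, (if b = a then (1:ℤ) else 0) * lam b) = lam a := by
          simp [ite_mul]
        have h2 : (∏ b, (MvPolynomial.X b : MvPolynomial (Fin n) (RatFunc ℚ))
            ^ (-(if b = a then (1:ℤ) else 0)).toNat) = 1 := by
          refine Finset.prod_eq_one (fun b _ => ?_)
          split <;> simp
        rw [h1, h2, mul_one, MvPolynomial.algebraMap_eq]
    have hPmem : Polynomial.aeval (MvPolynomial.X a : MvPolynomial (Fin n) (RatFunc ℚ)) P ∈ I := by
      rw [← hea]; exact hG (fun b => if b = a then 1 else 0)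
    have h0 : Polynomial.aeval (mk (MvPolynomial.X a)) P = 0 := by
      rw [Polynomial.aeval_algHom_apply mk (MvPolynomial.X a) P, hmk]
      rw [show (Ideal.Quotient.mkₐ (RatFunc ℚ) I) (Polynomial.aeval (MvPolynomial.X a) P)
        = Ideal.Quotient.mk I (Polynomial.aeval (MvPolynomial.X a) P) from rfl]
      rwa [Ideal.Quotient.eq_zero_iff_mem]
    have hc0 : P.coeff 0 ≠ 0 := by
      rw [Polynomial.coeff_zero_eq_eval_zero, hP, Polynomial.eval_prod]
      refine Finset.prod_ne_zero_iff.2 (fun lam _ => ?_)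
      rw [Polynomial.eval_sub, Polynomial.eval_X, Polynomial.eval_C, zero_sub, neg_ne_zero]
      exact zpow_ne_zero _ hx
    have h1 : mk (MvPolynomial.X a) * Polynomial.aeval (mk (MvPolynomial.X a)) P.divX
        + algebraMap (RatFunc ℚ) A (P.coeff 0) = 0 := by
      have h2 := congrArg (Polynomial.aeval (mk (MvPolynomial.X a))) (Polynomial.X_mul_divX_add P)
      rw [map_add, map_mul, Polynomial.aeval_X, Polynomial.aeval_C] at h2
      rw [h2]; exact h0
    refine IsUnit.of_mul_eq_one (Polynomial.aeval (mk (MvPolynomial.X a)) P.divX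
      * (- algebraMap (RatFunc ℚ) A (P.coeff 0)⁻¹)) ?_
    have hinv : algebraMap (RatFunc ℚ) A (P.coeff 0)
        * algebraMap (RatFunc ℚ) A (P.coeff 0)⁻¹ = 1 := by
      rw [← map_mul, mul_inv_cancel₀ hc0, map_one]
    linear_combination (- algebraMap (RatFunc ℚ) A (P.coeff 0)⁻¹) * h1 + hinv
  -- the units
  set u : Fin n → Aˣ := fun a => (hXunit a).unit with hu
  have hmono : ∀ k : Fin n → ℕ, mk (∏ b, MvPolynomial.X b ^ k b)
      = (↑(∏ b, (u b) ^ ((k b : ℤ))) : A) := by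
    intro k
    rw [map_prod]
    have hcoe : (↑(∏ b, (u b) ^ ((k b : ℤ))) : A) = ∏ b, (↑((u b) ^ ((k b : ℤ))) : A) :=
      map_prod (Units.coeHom A) (fun b => (u b) ^ ((k b : ℤ))) Finset.univ
    rw [hcoe]
    refine Finset.prod_congr rfl (fun b _ => ?_)
    rw [map_pow, show mk (MvPolynomial.X b) = ((u b : A)) from ((hXunit b).unit_spec).symm,
      ← Units.val_pow_eq_pow_val, ← zpow_natCast (u b) (k b)]
  have hsplitu : ∀ h : Fin n → ℤ, (∏ b, (u b) ^ (((h b).toNat : ℤ)))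
      = (∏ b, (u b) ^ (h b)) * (∏ b, (u b) ^ (((-(h b)).toNat : ℤ))) := by
    intro h
    rw [← Finset.prod_mul_distrib]
    refine Finset.prod_congr rfl (fun b _ => ?_)
    rw [← zpow_add]
    congr 1
    omega
  have hrel : ∀ h : Fin n → ℤ, ∏ lam ∈ D, ((↑(∏ a, (u a) ^ (h a)) : A)
      - algebraMap (RatFunc ℚ) A ((RatFunc.X : RatFunc ℚ) ^ (∑ a, h a * lam a))) = 0 := by
    intro h
    have hGh : mk (∏ lam ∈ D,
        ((∏ a, MvPolynomial.X a ^ (h a).toNat) -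
          MvPolynomial.C ((RatFunc.X : RatFunc ℚ) ^ (∑ a, h a * lam a : ℤ)) *
            ∏ a, MvPolynomial.X a ^ (-(h a)).toNat)) = 0 := by
      rw [hmk]
      rw [show (Ideal.Quotient.mkₐ (RatFunc ℚ) I) (∏ lam ∈ D,
        ((∏ a, MvPolynomial.X a ^ (h a).toNat) -
          MvPolynomial.C ((RatFunc.X : RatFunc ℚ) ^ (∑ a, h a * lam a : ℤ)) *
            ∏ a, MvPolynomial.X a ^ (-(h a)).toNat))
        = Ideal.Quotient.mk I (∏ lam ∈ D,
        ((∏ a, MvPolynomial.X a ^ (h a).toNat) -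
          MvPolynomial.C ((RatFunc.X : RatFunc ℚ) ^ (∑ a, h a * lam a : ℤ)) *
            ∏ a, MvPolynomial.X a ^ (-(h a)).toNat)) from rfl]
      rw [Ideal.Quotient.eq_zero_iff_mem]
      exact hG h
    rw [map_prod] at hGh
    have hfac : ∀ lam ∈ D,
        mk ((∏ b, MvPolynomial.X b ^ (h b).toNat) -
          MvPolynomial.C ((RatFunc.X : RatFunc ℚ) ^ (∑ b, h b * lam b : ℤ)) *
            ∏ b, MvPolynomial.X b ^ (-(h b)).toNat)
        = (↑(∏ b, (u b) ^ (((-(h b)).toNat : ℤ))) : A) *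
          ((↑(∏ b, (u b) ^ (h b)) : A)
            - algebraMap (RatFunc ℚ) A ((RatFunc.X : RatFunc ℚ) ^ (∑ b, h b * lam b))) := by
      intro lam _
      rw [map_sub, map_mul, hmono, hmono, hsplitu h]
      have hC : mk (MvPolynomial.C ((RatFunc.X : RatFunc ℚ) ^ (∑ b, h b * lam b)))
          = algebraMap (RatFunc ℚ) A ((RatFunc.X : RatFunc ℚ) ^ (∑ b, h b * lam b)) := by
        rw [← MvPolynomial.algebraMap_eq]; exact mk.commutes _
      rw [hC, Units.val_mul]
      ring
    rw [Finset.prod_congr rfl hfac, Finset.prod_mul_distrib, Finset.prod_const] at hGh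
    have hunit : IsUnit ((↑(∏ b, (u b) ^ (((-(h b)).toNat : ℤ))) : A) ^ D.card) :=
      ((∏ b, (u b) ^ (((-(h b)).toNat : ℤ))).isUnit).pow _
    exact (hunit.mul_right_eq_zero).1 hGh
  have hres := key_quot n D u hrel f hf
  have hcomp : (fun a => ((u a : A))) = (⇑mk ∘ MvPolynomial.X) := by
    funext a
    exact (hXunit a).unit_spec
  rw [hcomp] at hres
  rw [← MvPolynomial.aeval_unique mk] at hres
  rw [hmk] at hres
  rw [show (Ideal.Quotient.mkₐ (RatFunc ℚ) I) f = Ideal.Quotient.mk I f from rfl] at hres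
  rwa [Ideal.Quotient.eq_zero_iff_mem] at hres


/-- Let `D ⊂ ℤ^n` be finite and `p_λ = (v^{λ_1},…,v^{λ_n})` for `λ ∈ D`.
For `h ∈ ℤ^n` with positive/negative parts `h⁺, h⁻ ∈ ℕ^n`, set
`G_h = ∏_{λ ∈ D} (X^{h⁺} − v^{⟨h,λ⟩} X^{h⁻}) ∈ ℚ(v)[X₁,…,Xₙ]`.  Then the vanishing
ideal of the point set `{p_λ : λ ∈ D}` equals the ideal generated by the `G_h`. -/
theorem stmt4 (n : ℕ) (hn : 1 ≤ n) (D : Finset (Fin n → ℤ)) :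
    MvPolynomial.vanishingIdeal (RatFunc ℚ)
        ((fun lam : Fin n → ℤ => fun a : Fin n => (RatFunc.X : RatFunc ℚ) ^ (lam a : ℤ)) ''
          (↑D : Set (Fin n → ℤ))) =
      Ideal.span (Set.range fun h : Fin n → ℤ =>
        ∏ lam ∈ D,
          ((∏ a, MvPolynomial.X a ^ (h a).toNat) -
            MvPolynomial.C ((RatFunc.X : RatFunc ℚ) ^ (∑ a, h a * lam a : ℤ)) *
              ∏ a, MvPolynomial.X a ^ (-(h a)).toNat)) := by
  apply le_antisymm
  · intro f hf
    apply hard_dir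
    intro lam hlam
    exact hf _ ⟨lam, hlam, rfl⟩
  · rw [Ideal.span_le]
    rintro g ⟨h, rfl⟩
    rw [SetLike.mem_coe, MvPolynomial.mem_vanishingIdeal_iff]
    rintro x ⟨lam, hlam, rfl⟩
    exact easy_dir n D h lam hlam
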